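/- In any configuration of the system, at least one process is enabled, i.e., there is no terminal (deadlock) configuration of the algorithm. -/

import Mathlib

namespace BFS

inductive Status : Type
  | Idle | Working | Power | WeakE | StrongE
deriving DecidableEq

open Status

inductive Rule (V : Type) : Type
  | RC1 | RC2 | RC3 | RC4 | RC5 | RC6
  | R1 | R2
  | R3 (v : V)
  | R4 | R5 | R6 | R7
deriving DecidableEq

structure ProcState (V : Type) where
  P : Option V
  TS : Option V
  C : Bool
  S : Status
  ph : Bool

abbrev Config (V : Type) := V → ProcState V

variable {V : Type} [Fintype V] [DecidableEq V]

/-- Erroneous statuses. -/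
def Erroneous (s : Status) : Prop := s = WeakE ∨ s = StrongE

/-- The children of `u`: neighbors whose parent pointer designates `u`. -/
def Child (G : SimpleGraph V) (c : Config V) (u : V) : Set V :=
  {v | G.Adj u v ∧ (c v).P = some u}

/-- Closed neighborhood `N[u]`. -/
def ClosedNbr (G : SimpleGraph V) (u : V) : Set V := insert u (G.neighborSet u)

def StrongConflict (G : SimpleGraph V) (c : Config V) (u : V) : Prop :=
  (c u).S ≠ StrongE ∧
    ∃ w ∈ ClosedNbr G u, ∃ v ∈ ClosedNbr G u,
      (c v).C ≠ (c u).C ∧ (c w).S = Power ∧ (c v).S = Power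

def Conflict (G : SimpleGraph V) (r : V) (c : Config V) (u : V) : Prop :=
  (u ≠ r ∧ (c u).P ≠ none ∧
      ∃ v ∈ G.neighborSet u, (c v).S = Power ∧ (c v).C ≠ (c u).C) ∨
  (u = r ∧ (c u).S ≠ StrongE ∧
      ∃ v ∈ G.neighborSet u, (c v).S = Power ∧
        ((c v).C ≠ (c u).C ∨ Child G c u = ∅))

def Detached (G : SimpleGraph V) (r : V) (c : Config V) (u : V) : Prop :=
  Child G c u = ∅ ∧ ((c u).P = none ∨ u = r) ∧ (c u).S ≠ Power

def StrongEReady (G : SimpleGraph V) (c : Config V) (u : V) : Prop :=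
  (c u).S = StrongE ∧ ∀ v ∈ G.neighborSet u, (c v).S ≠ Power

def PowerFaulty (G : SimpleGraph V) (c : Config V) (u : V) : Prop :=
  (c u).S = Power ∧ ∃ v ∈ G.neighborSet u, (c v).S = StrongE

def Faulty (G : SimpleGraph V) (r : V) (c : Config V) (u : V) : Prop :=
  u ≠ r ∧ ∃ p, (c u).P = some p ∧ ¬ Erroneous (c p).S ∧
    (Erroneous (c u).S ∨
     (c u).C ≠ (c p).C ∨
     ((c p).S ≠ Working ∧ (c u).S ≠ Idle) ∨
     ((c p).S = (c u).S ∧ (c u).ph ≠ (c p).ph) ∨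
     ((c u).S = Power ∧ (c u).ph ≠ (c p).ph) ∨
     ((c p).S = Power ∧ (Child G c u ≠ ∅ ∨ (c u).ph ≠ (c p).ph)))

def IllegalRoot (G : SimpleGraph V) (r : V) (c : Config V) (u : V) : Prop :=
  u ≠ r ∧ (c u).P = none ∧ ¬ Detached G r c u

def IllegalLiveRoot (G : SimpleGraph V) (r : V) (c : Config V) (u : V) : Prop :=
  IllegalRoot G r c u ∧ ¬ Erroneous (c u).S

def IllegalChild (r : V) (c : Config V) (u : V) : Prop :=
  u ≠ r ∧ ∃ p, (c u).P = some p ∧ Erroneous (c p).S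

def Isolated (G : SimpleGraph V) (c : Config V) (u : V) : Prop :=
  (c u).S = WeakE ∨ (c u).S = Working ∨ StrongEReady G c u

def Ok (G : SimpleGraph V) (r : V) (c : Config V) (u : V) : Prop :=
  ¬ StrongConflict G c u ∧ ¬ Conflict G r c u ∧ ¬ PowerFaulty G c u ∧
  ¬ Faulty G r c u ∧ ¬ IllegalRoot G r c u ∧ ¬ IllegalChild r c u

def QuietSubTree (G : SimpleGraph V) (c : Config V) (u : V) : Prop :=
  ∀ v ∈ Child G c u, (c v).S = Idle ∧ (c v).ph = (c u).ph

def EndFirstPhase (G : SimpleGraph V) (c : Config V) (u : V) : Prop :=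
  (c u).S = Power ∧ QuietSubTree G c u ∧ ∀ v ∈ G.neighborSet u, (c v).C = (c u).C

def EndPhase (G : SimpleGraph V) (c : Config V) (u : V) : Prop :=
  (c u).S = Working ∧ QuietSubTree G c u

def EndLastPhase (G : SimpleGraph V) (c : Config V) (u : V) : Prop :=
  Child G c u = ∅ ∧ (EndFirstPhase G c u ∨ EndPhase G c u)

def EndIntermediatePhase (G : SimpleGraph V) (c : Config V) (u : V) : Prop :=
  Child G c u ≠ ∅ ∧ (EndFirstPhase G c u ∨ EndPhase G c u)

def Connection (G : SimpleGraph V) (r : V) (c : Config V) (u v : V) : Prop :=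
  Detached G r c u ∧ (Isolated G c u ∨ (c u).S = Idle) ∧
  G.Adj u v ∧ (c v).C ≠ (c u).C ∧ (c v).S = Power

def NewPhase (G : SimpleGraph V) (c : Config V) (u : V) : Prop :=
  ∃ p, (c u).P = some p ∧ QuietSubTree G c u ∧ (c u).S = Idle ∧ (c u).ph ≠ (c p).ph

/-- Guards of the rules RC1–RC6, R1–R7 of the algorithm. -/
def Guard (G : SimpleGraph V) (r : V) : Rule V → Config V → V → Prop
  | .RC1, c, u => u = r ∧ ¬ Conflict G r c u ∧ PowerFaulty G c u ∧ QuietSubTree G c u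
  | .RC2, c, u => u = r ∧ Detached G r c u ∧ StrongEReady G c u
  | .RC3, c, u => u = r ∧ Conflict G r c u
  | .RC4, c, u => u ≠ r ∧ StrongConflict G c u
  | .RC5, c, u => u ≠ r ∧ ¬ StrongConflict G c u ∧
      (Conflict G r c u ∨ Faulty G r c u ∨ PowerFaulty G c u ∨
       IllegalLiveRoot G r c u ∨ IllegalChild r c u)
  | .RC6, c, u => u ≠ r ∧ Detached G r c u ∧ Isolated G c u ∧
      ∀ v ∈ G.neighborSet u, (c v).C = (c u).C ∨ (c v).S ≠ Power
  | .R1, c, u => u = r ∧ Ok G r c u ∧ EndLastPhase G c u ∧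
      ∀ v ∈ G.neighborSet u, (c v).S ≠ StrongE
  | .R2, c, u => u = r ∧ Ok G r c u ∧ EndIntermediatePhase G c u
  | .R3 v, c, u => u ≠ r ∧ Ok G r c u ∧ Connection G r c u v
  | .R4, c, u => u ≠ r ∧ Ok G r c u ∧ NewPhase G c u ∧ Child G c u ≠ ∅
  | .R5, c, u => u ≠ r ∧ Ok G r c u ∧ NewPhase G c u ∧ Child G c u = ∅ ∧
      ∀ v ∈ G.neighborSet u, (c v).S ≠ StrongE
  | .R6, c, u => u ≠ r ∧ Ok G r c u ∧ EndIntermediatePhase G c u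
  | .R7, c, u => u ≠ r ∧ Ok G r c u ∧ (c u).P ≠ none ∧ EndLastPhase G c u

/-- Phase of the parent of `u` (or `u`'s own phase if it has no parent). -/
def parentPh (c : Config V) (u : V) : Bool :=
  match (c u).P with
  | some p => (c p).ph
  | none => (c u).ph

/-- The action of each rule: the new local state of the executing process `u`. -/
def execRule (c : Config V) (u : V) : Rule V → ProcState V
  | .RC1 => { c u with S := Working }
  | .RC2 => { c u with S := Working }
  | .RC3 => { c u with S := StrongE }
  | .RC4 => { c u with S := StrongE, P := none }
  | .RC5 => { c u with S := WeakE, P := none }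
  | .RC6 => { c u with S := Idle }
  | .R1 => { c u with C := !(c u).C, S := Power }
  | .R2 => { c u with ph := !(c u).ph, S := Working }
  | .R3 v => { c u with C := (c v).C, ph := (c v).ph, S := Idle, P := some v, TS := some v }
  | .R4 => { c u with ph := parentPh c u, S := Working }
  | .R5 => { c u with ph := parentPh c u, S := Power }
  | .R6 => { c u with S := Idle }
  | .R7 => { c u with S := Idle, P := none }

/-- A computation step: a nonempty set of enabled processes each atomically
executes one enabled rule; all other processes keep their state. -/
def IsStep (G : SimpleGraph V) (r : V) (c1 : Config V)
    (act : V → Option (Rule V)) (c2 : Config V) : Prop :=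
  (∃ u ρ, act u = some ρ) ∧
  ∀ u, (act u = none → c2 u = c1 u) ∧
       ∀ ρ, act u = some ρ → Guard G r ρ c1 u ∧ c2 u = execRule c1 u ρ

def Step (G : SimpleGraph V) (r : V) (c1 c2 : Config V) : Prop :=
  ∃ act, IsStep G r c1 act c2

/-- A process is enabled if the guard of some rule holds at it. -/
def Enabled (G : SimpleGraph V) (r : V) (c : Config V) (u : V) : Prop :=
  ∃ ρ : Rule V, Guard G r ρ c u

/-- Well-formed configurations: pointers designate neighbors, and the root has
no parent and only uses the statuses Power, Working, StrongE. -/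
def WellFormed (G : SimpleGraph V) (r : V) (c : Config V) : Prop :=
  (∀ u v, (c u).P = some v → G.Adj u v) ∧
  (∀ u v, (c u).TS = some v → G.Adj u v) ∧
  (c r).P = none ∧ (c r).TS = none ∧
  ((c r).S = Power ∨ (c r).S = Working ∨ (c r).S = StrongE)

/-- `PowerParent u`: some descendant of `u` (possibly `u`) may take the `Power`
status by a series of R4/R5 moves. -/
inductive PowerParent (c : Config V) : V → Prop
  | base (u p : V) : (c u).P = some p → (c u).S = Idle → (c p).S = Working →
      (c u).ph ≠ (c p).ph → PowerParent c u
  | step (u p : V) : (c u).P = some p → PowerParent c p → (c u).S = Idle →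
      (c u).ph = (c p).ph → PowerParent c u

def Influential (c : Config V) (u : V) : Prop :=
  (c u).S = Power ∨ PowerParent c u

/-- `u` lies on a branch rooted at `r` all of whose members are non-faulty,
and the root is not StrongE. -/
inductive InLegalTree (G : SimpleGraph V) (r : V) (c : Config V) : V → Prop
  | root : (c r).S ≠ StrongE → InLegalTree G r c r
  | child (u p : V) : (c u).P = some p → InLegalTree G r c p →
      ¬ Faulty G r c u → InLegalTree G r c u

def InsideLegalTree (G : SimpleGraph V) (r : V) (c : Config V) (u : V) : Prop :=
  InLegalTree G r c u ∧ (c u).S ≠ Power ∧ Child G c u ≠ ∅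

def UnSafe (G : SimpleGraph V) (r : V) (c : Config V) (u : V) : Prop :=
  InsideLegalTree G r c u ∧
    ∃ v ∈ G.neighborSet u, (c v).C ≠ (c u).C ∧ Influential c v

def UnRegular (G : SimpleGraph V) (r : V) (c : Config V) (u : V) : Prop :=
  ¬ Detached G r c u ∧ ¬ InLegalTree G r c u

/-- Infinite executions of the algorithm (by Theorem `no deadlock` there is no
terminal configuration). -/
structure Execution (G : SimpleGraph V) (r : V) where
  conf : ℕ → Config V
  act : ℕ → V → Option (Rule V)
  valid : ∀ i, IsStep G r (conf i) (act i) (conf (i + 1))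

/-- The suffix of an execution starting at time `k`. -/
def Execution.shift {G : SimpleGraph V} {r : V} (e : Execution G r) (k : ℕ) :
    Execution G r where
  conf := fun i => e.conf (k + i)
  act := fun i => e.act (k + i)
  valid := fun i => e.valid (k + i)

/-- The first round of `e` is completed by time `t`: every process enabled in
the initial configuration has executed a rule or been neutralized before `t`. -/
def CompletesRound (G : SimpleGraph V) (r : V) (e : Execution G r) (t : ℕ) : Prop :=
  ∀ u, Enabled G r (e.conf 0) u →
    ∃ j, j < t ∧ (e.act j u ≠ none ∨ ¬ Enabled G r (e.conf (j + 1)) u)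

/-- `RoundsElapsed G r e k t`: at least `k` rounds of `e` are completed by time `t`. -/
def RoundsElapsed (G : SimpleGraph V) (r : V) (e : Execution G r) : ℕ → ℕ → Prop
  | 0, t => t = 0
  | k + 1, t => ∃ s, s ≤ t ∧ RoundsElapsed G r e k s ∧
      CompletesRound G r (e.shift s) (t - s)

/-- The tree-construction rules R1–R7. -/
def TreeRule : Rule V → Prop := fun ρ =>
  ρ = Rule.R1 ∨ ρ = Rule.R2 ∨ (∃ v, ρ = Rule.R3 v) ∨ ρ = Rule.R4 ∨
  ρ = Rule.R5 ∨ ρ = Rule.R6 ∨ ρ = Rule.R7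

noncomputable def FaultyCount (G : SimpleGraph V) (r : V) (c : Config V) : ℕ :=
  {u | Faulty G r c u}.ncard

/-- Inside-safe executions: insideLegalTree processes execute only R1–R7 and
the number of Faulty processes stays constant. -/
def InsideSafeExec (G : SimpleGraph V) (r : V) (e : Execution G r) : Prop :=
  (∀ i u ρ, InsideLegalTree G r (e.conf i) u → e.act i u = some ρ → TreeRule ρ) ∧
  (∀ i, FaultyCount G r (e.conf i) = FaultyCount G r (e.conf 0))

/-- Safe executions. -/
def SafeExec (G : SimpleGraph V) (r : V) (e : Execution G r) : Prop :=
  (∀ i u ρ, InsideLegalTree G r (e.conf i) u → e.act i u = some ρ → TreeRule ρ) ∧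
  (∀ i u, Influential (e.conf i) u → UnRegular G r (e.conf i) u → e.act i u = none) ∧
  (∀ i u, ¬ PowerFaulty G (e.conf i) u → ¬ PowerFaulty G (e.conf (i + 1)) u) ∧
  (∀ i u, e.act i u ≠ some Rule.RC1 ∧ e.act i u ≠ some Rule.RC4 ∧
      e.act i u ≠ some Rule.RC3 ∧ e.act i u ≠ some Rule.RC2)

/-- Pseudo-regular executions. -/
def PseudoRegularExec (G : SimpleGraph V) (r : V) (e : Execution G r) : Prop :=
  SafeExec G r e ∧
  (∀ i u ρ, InLegalTree G r (e.conf i) u → e.act i u = some ρ → TreeRule ρ) ∧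
  (∀ i u, ¬ UnRegular G r (e.conf i) u → ¬ UnRegular G r (e.conf (i + 1)) u)

/-- Regular executions: pseudo-regular and all processes execute only R1–R7. -/
def RegularExec (G : SimpleGraph V) (r : V) (e : Execution G r) : Prop :=
  PseudoRegularExec G r e ∧ (∀ i u ρ, e.act i u = some ρ → TreeRule ρ)

/-- `u` executes rules infinitely often along `e`. -/
def ActsInfOften {G : SimpleGraph V} {r : V} (e : Execution G r) (u : V) : Prop :=
  ∀ k, ∃ i, k ≤ i ∧ e.act i u ≠ none

def A1 (G : SimpleGraph V) (r : V) (c : Config V) : Prop :=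
  ∀ u, ¬ Faulty G r c u ∧ ¬ IllegalLiveRoot G r c u

def A2 (G : SimpleGraph V) (r : V) (c : Config V) : Prop :=
  A1 G r c ∧ ∀ u, ¬ UnSafe G r c u

def A3 (G : SimpleGraph V) (r : V) (c : Config V) : Prop :=
  A2 G r c ∧ ∀ u, ¬ Influential c u ∨ InLegalTree G r c u

def A4 (G : SimpleGraph V) (r : V) (c : Config V) : Prop :=
  A3 G r c ∧ ∀ u, (c u).S ≠ StrongE

def PIC (r : V) (c : Config V) (u : V) : Prop :=
  Influential c u ∧ (c u).C ≠ (c r).C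

def PICPowerParent (r : V) (c : Config V) (u : V) : Prop :=
  PIC r c u ∧ PowerParent c u


/-- In any (well-formed) configuration of the system, at least one
process is enabled: there is no terminal configuration of the algorithm. -/
theorem stmt0 {V : Type} [Fintype V] [DecidableEq V]
    (G : SimpleGraph V) (r : V) (hconn : G.Connected)
    (c : Config V) (hwf : WellFormed G r c) :
    ∃ u, Enabled G r c u := by
  classical
  by_contra hcon
  push_neg at hcon
  have hne : ∀ (u : V) (ρ : Rule V), ¬ Guard G r ρ c u := fun u ρ hg => hcon u ⟨ρ, hg⟩
  obtain ⟨hPadj, hTSadj, hPr, hTSr, hSr⟩ := hwf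
  -- basic guard consequences
  have hSC : ∀ u, u ≠ r → ¬ StrongConflict G c u := fun u hu hsc => hne u .RC4 ⟨hu, hsc⟩
  have hF : ∀ u, ¬ Faulty G r c u := fun u hf =>
    hne u .RC5 ⟨hf.1, hSC u hf.1, Or.inr (Or.inl hf)⟩
  have hIC : ∀ u, ¬ IllegalChild r c u := fun u hic =>
    hne u .RC5 ⟨hic.1, hSC u hic.1, Or.inr (Or.inr (Or.inr (Or.inr hic)))⟩
  have hILR : ∀ u, ¬ IllegalLiveRoot G r c u := fun u hil =>
    hne u .RC5 ⟨hil.1.1, hSC u hil.1.1, Or.inr (Or.inr (Or.inr (Or.inl hil)))⟩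
  have hConf : ∀ u, ¬ Conflict G r c u := by
    intro u hc
    by_cases hu : u = r
    · subst hu; exact hne u .RC3 ⟨rfl, hc⟩
    · exact hne u .RC5 ⟨hu, hSC u hu, Or.inl hc⟩
  -- every Power process has a quiet subtree
  have hQP : ∀ u, (c u).S = Power → QuietSubTree G c u := by
    intro u hPow v hv
    obtain ⟨hadj, hPv⟩ := hv
    have hvr : v ≠ r := by intro h; rw [h, hPr] at hPv; exact nomatch hPv
    have hnerr : ¬ Erroneous (c u).S := by
      rw [hPow]; rintro (h | h) <;> exact Status.noConfusion h
    constructor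
    · by_contra hSv
      exact hF v ⟨hvr, u, hPv, hnerr, Or.inr (Or.inr (Or.inl
        ⟨by rw [hPow]; exact fun h => Status.noConfusion h, hSv⟩))⟩
    · by_contra hph
      exact hF v ⟨hvr, u, hPv, hnerr,
        Or.inr (Or.inr (Or.inr (Or.inr (Or.inr ⟨hPow, Or.inr hph⟩))))⟩
  have hPF : ∀ u, ¬ PowerFaulty G c u := by
    intro u hpf
    by_cases hu : u = r
    · subst hu; exact hne u .RC1 ⟨rfl, hConf u, hpf, hQP u hpf.1⟩
    · exact hne u .RC5 ⟨hu, hSC u hu, Or.inr (Or.inr (Or.inl hpf))⟩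
  -- erroneous processes have no children
  have hChE : ∀ p, Erroneous (c p).S → Child G c p = ∅ := by
    intro p hp
    apply Set.eq_empty_iff_forall_notMem.mpr
    intro x hx
    obtain ⟨hadj, hPx⟩ := hx
    have hxr : x ≠ r := by intro h; rw [h, hPr] at hPx; exact nomatch hPx
    exact hIC x ⟨hxr, p, hPx, hp⟩
  -- no StrongE process
  have hNoSE : ∀ u, (c u).S ≠ StrongE := by
    intro u hSE
    have hErr : Erroneous (c u).S := Or.inr hSE
    have hchild := hChE u hErr
    have hready : StrongEReady G c u := by
      refine ⟨hSE, fun v hv hPv => hPF v ⟨hPv, u, ?_, hSE⟩⟩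
      exact (SimpleGraph.mem_neighborSet G v u).mpr
        ((SimpleGraph.mem_neighborSet G u v).mp hv).symm
    have hnPow : (c u).S ≠ Power := by rw [hSE]; exact fun h => Status.noConfusion h
    by_cases hu : u = r
    · subst hu
      exact hne u .RC2 ⟨rfl, ⟨hchild, Or.inr rfl, hnPow⟩, hready⟩
    · cases hp : (c u).P with
      | some q =>
        by_cases hq : Erroneous (c q).S
        · exact hIC u ⟨hu, q, hp, hq⟩
        · exact hF u ⟨hu, q, hp, hq, Or.inl hErr⟩
      | none =>
        refine hne u .RC6 ⟨hu, ⟨hchild, Or.inl hp, hnPow⟩, Or.inr (Or.inr hready),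
          fun v hv => Or.inr fun hPow => ?_⟩
        refine hPF v ⟨hPow, u, ?_, hSE⟩
        exact (SimpleGraph.mem_neighborSet G v u).mpr
          ((SimpleGraph.mem_neighborSet G u v).mp hv).symm
  -- no WeakE process
  have hNoWE : ∀ u, (c u).S ≠ WeakE := by
    intro u hW
    have hErr : Erroneous (c u).S := Or.inl hW
    have hchild := hChE u hErr
    have hur : u ≠ r := by
      intro h; rw [h] at hW
      rcases hSr with h' | h' | h' <;> exact Status.noConfusion (h'.symm.trans hW)
    have hnPow : (c u).S ≠ Power := by rw [hW]; exact fun h => Status.noConfusion h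
    cases hp : (c u).P with
    | some q =>
      by_cases hq : Erroneous (c q).S
      · exact hIC u ⟨hur, q, hp, hq⟩
      · exact hF u ⟨hur, q, hp, hq, Or.inl hErr⟩
    | none =>
      have hdet : Detached G r c u := ⟨hchild, Or.inl hp, hnPow⟩
      by_cases hall : ∀ v ∈ G.neighborSet u, (c v).C = (c u).C ∨ (c v).S ≠ Power
      · exact hne u .RC6 ⟨hur, hdet, Or.inl hW, hall⟩
      · push_neg at hall
        obtain ⟨v, hv, hC, hPow⟩ := hall
        have hOku : Ok G r c u :=
          ⟨hSC u hur, hConf u, hPF u, hF u, fun hir => hir.2.2 hdet, hIC u⟩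
        exact hne u (.R3 v) ⟨hur, hOku, hdet, Or.inl (Or.inl hW),
          (SimpleGraph.mem_neighborSet G u v).mp hv, hC, hPow⟩
  have hNE : ∀ u, ¬ Erroneous (c u).S := fun u h => h.elim (hNoWE u) (hNoSE u)
  have hNIR : ∀ u, ¬ IllegalRoot G r c u := fun u hir => hILR u ⟨hir, hNE u⟩
  have hDet : ∀ u, u ≠ r → (c u).P = none → Detached G r c u := by
    intro u hu hp
    by_contra hnd
    exact hNIR u ⟨hu, hp, hnd⟩
  have hOkAll : ∀ u, Ok G r c u := by
    intro u
    by_cases hu : u = r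
    · subst hu
      refine ⟨?_, hConf u, hPF u, hF u, hNIR u, hIC u⟩
      rintro ⟨hnse, w, hw, v, hv, hCv, hPw, hPv⟩
      rcases Set.mem_insert_iff.mp hv with hv' | hv'
      · exact hCv (by rw [hv'])
      · exact hConf u (Or.inr ⟨rfl, hnse, v, hv', hPv, Or.inl hCv⟩)
    · exact ⟨hSC u hu, hConf u, hPF u, hF u, hNIR u, hIC u⟩
  -- every Power process agrees in color with its neighbors
  have hColor : ∀ u, (c u).S = Power → ∀ v ∈ G.neighborSet u, (c v).C = (c u).C := by
    intro u hPow v hv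
    by_contra hC
    have hadj : G.Adj u v := (SimpleGraph.mem_neighborSet G u v).mp hv
    have hmem : u ∈ G.neighborSet v := (SimpleGraph.mem_neighborSet G v u).mpr hadj.symm
    by_cases hvr : v = r
    · subst hvr
      exact hConf v (Or.inr ⟨rfl, hNoSE v, u, hmem, hPow, Or.inl (Ne.symm hC)⟩)
    · cases hp : (c v).P with
      | some q =>
        refine hConf v (Or.inl ⟨hvr, ?_, u, hmem, hPow, Ne.symm hC⟩)
        rw [hp]; exact fun h => nomatch h
      | none =>
        have hdet := hDet v hvr hp
        have hiso : Isolated G c v ∨ (c v).S = Idle := by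
          cases hsv : (c v).S with
          | Idle => exact Or.inr rfl
          | Working => exact Or.inl (Or.inr (Or.inl hsv))
          | Power => exact absurd hsv hdet.2.2
          | WeakE => exact Or.inl (Or.inl hsv)
          | StrongE => exact absurd hsv (hNoSE v)
        exact hne v (.R3 u) ⟨hvr, hOkAll v, hdet, hiso, hadj.symm, Ne.symm hC, hPow⟩
  -- a Working/Power process with quiet subtree is enabled
  have hQuietFalse : ∀ u, QuietSubTree G c u →
      ((c u).S = Working ∨ (c u).S = Power) → False := by
    intro u hq hS
    have hend : EndFirstPhase G c u ∨ EndPhase G c u := by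
      rcases hS with hW | hP
      · exact Or.inr ⟨hW, hq⟩
      · exact Or.inl ⟨hP, hq, hColor u hP⟩
    have hnse : ∀ v ∈ G.neighborSet u, (c v).S ≠ StrongE := fun v _ => hNoSE v
    by_cases hu : u = r
    · subst hu
      by_cases hc : Child G c u = ∅
      · exact hne u .R1 ⟨rfl, hOkAll u, ⟨hc, hend⟩, hnse⟩
      · exact hne u .R2 ⟨rfl, hOkAll u, ⟨hc, hend⟩⟩
    · cases hp : (c u).P with
      | some q =>
        by_cases hc : Child G c u = ∅
        · refine hne u .R7 ⟨hu, hOkAll u, ?_, ⟨hc, hend⟩⟩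
          rw [hp]; exact fun h => nomatch h
        · exact hne u .R6 ⟨hu, hOkAll u, ⟨hc, hend⟩⟩
      | none =>
        have hdet := hDet u hu hp
        have hW : (c u).S = Working := by
          rcases hS with h | h
          · exact h
          · exact absurd h hdet.2.2
        refine hne u .RC6 ⟨hu, hdet, Or.inr (Or.inl hW), fun v hv => ?_⟩
        by_cases hPow : (c v).S = Power
        · refine Or.inl (hColor v hPow u ?_).symm
          exact (SimpleGraph.mem_neighborSet G v u).mpr
            ((SimpleGraph.mem_neighborSet G u v).mp hv).symm
        · exact Or.inr hPow
  have hNoPow : ∀ u, (c u).S ≠ Power := fun u hPow =>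
    hQuietFalse u (hQP u hPow) (Or.inr hPow)
  -- Idle processes have quiet subtrees
  have hQI : ∀ u, (c u).S = Idle → QuietSubTree G c u := by
    intro u hI v hv
    obtain ⟨hadj, hPv⟩ := hv
    have hvr : v ≠ r := by intro h; rw [h, hPr] at hPv; exact nomatch hPv
    have hnerr : ¬ Erroneous (c u).S := by
      rw [hI]; rintro (h | h) <;> exact Status.noConfusion h
    have hSv : (c v).S = Idle := by
      by_contra hSv
      exact hF v ⟨hvr, u, hPv, hnerr, Or.inr (Or.inr (Or.inl
        ⟨by rw [hI]; exact fun h => Status.noConfusion h, hSv⟩))⟩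
    refine ⟨hSv, ?_⟩
    by_contra hph
    exact hF v ⟨hvr, u, hPv, hnerr,
      Or.inr (Or.inr (Or.inr (Or.inl ⟨hI.trans hSv.symm, hph⟩)))⟩
  -- every Working process has a Working child
  have hWC : ∀ u, (c u).S = Working → ∃ w, (c w).P = some u ∧ (c w).S = Working := by
    intro u hW
    by_contra hno
    push_neg at hno
    refine hQuietFalse u (fun v hv => ?_) (Or.inl hW)
    obtain ⟨hadj, hPv⟩ := hv
    have hvr : v ≠ r := by intro h; rw [h, hPr] at hPv; exact nomatch hPv
    have hnerr : ¬ Erroneous (c u).S := by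
      rw [hW]; rintro (h | h) <;> exact Status.noConfusion h
    have hSv : (c v).S = Idle := by
      cases hsv : (c v).S with
      | Idle => rfl
      | Working => exact absurd hsv (hno v hPv)
      | Power => exact absurd hsv (hNoPow v)
      | WeakE => exact absurd hsv (hNoWE v)
      | StrongE => exact absurd hsv (hNoSE v)
    refine ⟨hSv, ?_⟩
    by_contra hph
    have hNP : NewPhase G c v := ⟨u, hPv, hQI v hSv, hSv, hph⟩
    by_cases hcv : Child G c v = ∅
    · exact hne v .R5 ⟨hvr, hOkAll v, hNP, hcv, fun w _ => hNoSE w⟩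
    · exact hne v .R4 ⟨hvr, hOkAll v, hNP, hcv⟩
  have hrW : (c r).S = Working := by
    rcases hSr with h | h | h
    · exact absurd h (hNoPow r)
    · exact h
    · exact absurd h (hNoSE r)
  -- build an injective infinite chain of Working processes from the root
  have hstep : ∀ u : {v : V // (c v).S = Working},
      ∃ w : {v : V // (c v).S = Working}, (c w.1).P = some u.1 := by
    rintro ⟨u, hu⟩
    obtain ⟨w, hPw, hWw⟩ := hWC u hu
    exact ⟨⟨w, hWw⟩, hPw⟩
  choose f hf using hstep
  have hfinj : Function.Injective f := by
    intro x y hxy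
    have h1 := hf x
    have h2 := hf y
    rw [hxy] at h1
    exact Subtype.ext (Option.some_injective V (h1.symm.trans h2))
  have hnr : ∀ x, f x ≠ ⟨r, hrW⟩ := by
    intro x hx
    have h1 := hf x
    rw [hx] at h1
    exact nomatch (hPr.symm.trans h1)
  have key : ∀ m k, f^[m] ⟨r, hrW⟩ = f^[m + (k + 1)] ⟨r, hrW⟩ → False := by
    intro m k h
    rw [Function.iterate_add_apply] at h
    have h2 := (hfinj.iterate m) h
    rw [Function.iterate_succ_apply'] at h2
    exact hnr _ h2.symm
  have hseq : Function.Injective (fun n => f^[n] (⟨r, hrW⟩ : {v : V // (c v).S = Working})) := by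
    intro m n hmn
    by_contra hne'
    rcases lt_or_gt_of_ne hne' with h | h
    · exact key m (n - m - 1) (by rw [show m + (n - m - 1 + 1) = n by omega]; exact hmn)
    · exact key n (m - n - 1) (by rw [show n + (m - n - 1 + 1) = m by omega]; exact hmn.symm)
  obtain ⟨a, b, hab, heq⟩ := Finite.exists_ne_map_eq_of_infinite
    (fun n => f^[n] (⟨r, hrW⟩ : {v : V // (c v).S = Working}))
  exact hab (hseq heq)

end BFS
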